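/- For every s > 0 and every τ ∈ [0,π): the union over τ* ∈ (τ, π) of the sets ⋄^{τ*}_{τ,s} equals ⋄_{τ,s}, and for all τ < τ₀ ≤ τ₁ < π one has ⋄^{τ₀}_{τ,s} ⊆ ⋄^{τ₁}_{τ,s} ⊆ ⋄_{τ,s}. -/
import Mathlib


/-- The unit three-sphere in `ℝ⁴` (as the set of `ξ : Fin 4 → ℝ` of unit length,
indexed so that `ξ 3 = ξ⁴`). -/
def sphere3 : Set (Fin 4 → ℝ) := {ξ | (ξ 0) ^ 2 + (ξ 1) ^ 2 + (ξ 2) ^ 2 + (ξ 3) ^ 2 = 1}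

/-- `h(τ,ξ) = cos τ - ξ⁴`. -/
noncomputable def hfun (p : ℝ × (Fin 4 → ℝ)) : ℝ := Real.cos p.1 - p.2 3

/-- `ℏ(τ,ξ) = cos τ + ξ⁴`. -/
noncomputable def hbarfun (p : ℝ × (Fin 4 → ℝ)) : ℝ := Real.cos p.1 + p.2 3

/-- `𝔰(τ,ξ) = (2 sin τ + √(1 - (ξ⁴)²)) / ℏ(τ,ξ)`. -/
noncomputable def sfun (p : ℝ × (Fin 4 → ℝ)) : ℝ :=
  (2 * Real.sin p.1 + Real.sqrt (1 - (p.2 3) ^ 2)) / hbarfun p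

/-- The future half of the Minkowski diamond,
`⋄₊ = {(τ,ξ) ∈ [0,π) × S³ : h(τ,ξ) > 0}`. -/
def diamondPlus : Set (ℝ × (Fin 4 → ℝ)) :=
  {p | p.2 ∈ sphere3 ∧ 0 ≤ p.1 ∧ p.1 < Real.pi ∧ 0 < hfun p}

/-- `Δ_{<r} = {(τ,ξ) ∈ ⋄₊ : ℏ(τ,ξ) > 0 and 𝔰(τ,ξ) < r}`. -/
noncomputable def deltaLT (r : ℝ) : Set (ℝ × (Fin 4 → ℝ)) :=
  {p ∈ diamondPlus | 0 < hbarfun p ∧ sfun p < r}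

/-- `⋄ₛ = ⋄₊ \ Δ_{<s/6}`. -/
noncomputable def diamondS (s : ℝ) : Set (ℝ × (Fin 4 → ℝ)) := diamondPlus \ deltaLT (s / 6)

/-- `⋄_{τ,s} = ({τ} × S³) ∩ ⋄ₛ`. -/
noncomputable def diamondTauS (τ s : ℝ) : Set (ℝ × (Fin 4 → ℝ)) :=
  ({τ} ×ˢ (Set.univ : Set (Fin 4 → ℝ))) ∩ diamondS s

/-- `φ(τ,ξ) = √((1 - cos τ)/(1 - ξ⁴))`. -/
noncomputable def phifun (p : ℝ × (Fin 4 → ℝ)) : ℝ :=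
  Real.sqrt ((1 - Real.cos p.1) / (1 - p.2 3))

/-- `⋄^{τ*} = {(τ,ξ) ∈ ⋄₊ : 0 ≤ τ ≤ τ* and φ(τ,ξ) ≤ √((1 - cos((τ*+π)/2))/2)}`. -/
noncomputable def diamondUpTo (τstar : ℝ) : Set (ℝ × (Fin 4 → ℝ)) :=
  {p ∈ diamondPlus | 0 ≤ p.1 ∧ p.1 ≤ τstar ∧
    phifun p ≤ Real.sqrt ((1 - Real.cos ((τstar + Real.pi) / 2)) / 2)}

/-- Lemma 5.4 (lem:Dtauexhaustion) of the paper: for every `s > 0` and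
`τ ∈ [0,π)`, the sets `⋄^{τ*}_{τ,s} = ⋄_{τ,s} ∩ ⋄^{τ*}` for `τ* ∈ (τ,π)` exhaust
`⋄_{τ,s}`, monotonically. -/
theorem stmt9 (s : ℝ) (hs : 0 < s) (τ : ℝ) (hτ : τ ∈ Set.Ico (0 : ℝ) Real.pi) :
    (⋃ τstar ∈ Set.Ioo τ Real.pi, diamondTauS τ s ∩ diamondUpTo τstar) = diamondTauS τ s ∧
    (∀ τ₀ τ₁ : ℝ, τ < τ₀ → τ₀ ≤ τ₁ → τ₁ < Real.pi →
      diamondTauS τ s ∩ diamondUpTo τ₀ ⊆ diamondTauS τ s ∩ diamondUpTo τ₁ ∧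
      diamondTauS τ s ∩ diamondUpTo τ₁ ⊆ diamondTauS τ s) := by
  obtain ⟨hτ0, hτπ⟩ := hτ
  constructor
  · apply Set.Subset.antisymm
    · intro p hp
      simp only [Set.mem_iUnion] at hp
      obtain ⟨_, _, hp, _⟩ := hp
      exact hp
    · intro p hp
      obtain ⟨hpT, hpS⟩ := hp
      have hpτ : p.1 = τ := hpT.1
      obtain ⟨hsph, hp0, hpπ, hh⟩ := hpS.1
      have hcos : p.2 3 < Real.cos p.1 := by
        have := hh; simp only [hfun] at this; linarith
      have hcos1 : Real.cos p.1 ≤ 1 := Real.cos_le_one _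
      have hden : 0 < 1 - p.2 3 := by linarith
      set c : ℝ := (1 - Real.cos p.1) / (1 - p.2 3) with hc
      have hc0 : 0 ≤ c := div_nonneg (by linarith) hden.le
      have hc1 : c < 1 := (div_lt_one hden).mpr (by linarith)
      set θ₀ : ℝ := Real.arccos (1 - 2 * c) with hθ₀
      have hθ₀0 : 0 ≤ θ₀ := Real.arccos_nonneg _
      have hθ₀π : θ₀ < Real.pi := by
        have : Real.arccos (1 - 2 * c) ≠ Real.pi := by
          intro h
          have := Real.arccos_eq_pi.mp h
          linarith
        exact lt_of_le_of_ne (Real.arccos_le_pi _) this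
      set τstar : ℝ := max (2 * θ₀ - Real.pi) ((τ + Real.pi) / 2) with hτs
      have hτlt : τ < τstar := lt_of_lt_of_le (by linarith) (le_max_right _ _)
      have hτsπ : τstar < Real.pi := max_lt (by linarith) (by linarith)
      have hmid : θ₀ ≤ (τstar + Real.pi) / 2 := by
        have := le_max_left (2 * θ₀ - Real.pi) ((τ + Real.pi) / 2)
        rw [← hτs] at this; linarith
      have hmidπ : (τstar + Real.pi) / 2 ≤ Real.pi := by linarith
      have hcosle : Real.cos ((τstar + Real.pi) / 2) ≤ 1 - 2 * c := by
        have := Real.cos_le_cos_of_nonneg_of_le_pi hθ₀0 hmidπ hmid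
        rwa [Real.cos_arccos (by linarith) (by linarith)] at this
      simp only [Set.mem_iUnion]
      refine ⟨τstar, ⟨hτlt, hτsπ⟩, ⟨hpT, hpS⟩, ⟨hsph, hp0, hpπ, hh⟩, hp0,
        by rw [hpτ]; exact hτlt.le, ?_⟩
      have : phifun p = Real.sqrt c := rfl
      rw [this]
      exact Real.sqrt_le_sqrt (by linarith)
  · intro τ₀ τ₁ h0 h01 h1π
    constructor
    · rintro p ⟨hpT, hpd, hx0, hx1, hφ⟩
      refine ⟨hpT, hpd, hx0, le_trans hx1 h01, le_trans hφ (Real.sqrt_le_sqrt ?_)⟩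
      have hcle : Real.cos ((τ₁ + Real.pi) / 2) ≤ Real.cos ((τ₀ + Real.pi) / 2) :=
        Real.cos_le_cos_of_nonneg_of_le_pi (by linarith) (by linarith) (by linarith)
      linarith
    · exact Set.inter_subset_left
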